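/- Let d be a positive integer with d ≡ 2 (mod 6). Then d satisfies condition (**) if and only if -3 is a square modulo 2d. -/

import Mathlib

/-- A root of `x^3 = 1`, `x ≠ 1` gives a root of `x^2+x+1`. -/
private lemma aux_sq_add {p : ℕ} [Fact p.Prime] (w : ZMod p) (h3 : w ^ 3 = 1)
    (h1 : w ≠ 1) : w ^ 2 + w + 1 = 0 := by
  have h : (w - 1) * (w ^ 2 + w + 1) = 0 := by
    have : (w - 1) * (w ^ 2 + w + 1) = w ^ 3 - 1 := by ring
    rw [this, h3, sub_self]
  rcases mul_eq_zero.mp h with h | h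
  · exact absurd (sub_eq_zero.mp h) h1
  · exact h

/-- For a prime `p ≡ 1 (mod 3)`, `-3` is a square mod `p`. -/
private lemma aux_A (p : ℕ) (hp : p.Prime) (h3 : p % 3 = 1) :
    ∃ x : ℤ, (p : ℤ) ∣ x ^ 2 + 3 := by
  haveI : Fact p.Prime := ⟨hp⟩
  have hcard : 3 ∣ Fintype.card (ZMod p)ˣ := by
    rw [ZMod.card_units p]
    have := hp.two_le
    omega
  obtain ⟨u, hu⟩ := exists_prime_orderOf_dvd_card 3 hcard
  set w : ZMod p := (u : ZMod p) with hw
  have hw3 : w ^ 3 = 1 := by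
    have h1 : u ^ 3 = 1 := by rw [← hu]; exact pow_orderOf_eq_one u
    have : ((u ^ 3 : (ZMod p)ˣ) : ZMod p) = ((1 : (ZMod p)ˣ) : ZMod p) := by rw [h1]
    push_cast at this
    exact this
  have hw1 : w ≠ 1 := by
    intro h
    have : u = 1 := Units.ext h
    rw [this, orderOf_one] at hu
    omega
  have hq : w ^ 2 + w + 1 = 0 := aux_sq_add w hw3 hw1
  refine ⟨((2 * w + 1 : ZMod p).val : ℤ), ?_⟩
  rw [← ZMod.intCast_zmod_eq_zero_iff_dvd]
  push_cast
  rw [ZMod.natCast_val, ZMod.cast_id]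
  linear_combination (4 : ZMod p) * hq

/-- If an odd prime `p` divides `x^2+3` then `p = 3` or `p ≡ 1 (mod 3)`. -/
private lemma aux_B (p : ℕ) (hp : p.Prime) (hodd : Odd p) (x : ℤ)
    (h : (p : ℤ) ∣ x ^ 2 + 3) : p = 3 ∨ p % 3 = 1 := by
  by_cases hp3 : p = 3
  · exact Or.inl hp3
  right
  haveI : Fact p.Prime := ⟨hp⟩
  have hy : (x : ZMod p) ^ 2 + 3 = 0 := by
    have := (ZMod.intCast_zmod_eq_zero_iff_dvd _ p).mpr h
    push_cast at this
    exact this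
  have hp2 : p ≠ 2 := by
    rcases hodd with ⟨m, hm⟩
    omega
  have h2 : (2 : ZMod p) ≠ 0 := by
    intro h0
    have h0' : ((2 : ℕ) : ZMod p) = 0 := by exact_mod_cast h0
    have hdvd := (ZMod.natCast_eq_zero_iff 2 p).mp h0'
    have hle := Nat.le_of_dvd (by norm_num) hdvd
    have := hp.two_le
    exact hp2 (by omega)
  have h3ne : (3 : ZMod p) ≠ 0 := by
    intro h0
    have h0' : ((3 : ℕ) : ZMod p) = 0 := by exact_mod_cast h0
    have := (ZMod.natCast_eq_zero_iff 3 p).mp h0'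
    exact hp3 ((Nat.prime_dvd_prime_iff_eq hp Nat.prime_three).mp this)
  set w : ZMod p := ((x : ZMod p) - 1) * (2 : ZMod p)⁻¹ with hwdef
  have h2w : 2 * w = (x : ZMod p) - 1 := by
    rw [hwdef, mul_comm, mul_assoc, inv_mul_cancel₀ h2, mul_one]
  have hq : w ^ 2 + w + 1 = 0 := by
    have h4 : (4 : ZMod p) * (w ^ 2 + w + 1) = 0 := by
      have hz : (2 * w + 1) ^ 2 + 3 = 0 := by rw [h2w]; linear_combination hy
      linear_combination hz
    have h4ne : (4 : ZMod p) ≠ 0 := by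
      intro h0
      have : (2 : ZMod p) * 2 = 0 := by linear_combination h0
      rcases mul_eq_zero.mp this with h' | h' <;> exact h2 h'
    exact (mul_eq_zero.mp h4).resolve_left h4ne
  have hw3 : w ^ 3 = 1 := by
    have h5 : (w - 1) * (w ^ 2 + w + 1) = w ^ 3 - 1 := by ring
    rw [hq, mul_zero] at h5
    linear_combination -h5
  have hw1 : w ≠ 1 := by
    intro h0
    rw [h0] at hq
    exact h3ne (by linear_combination hq)
  have hunit : IsUnit w := IsUnit.of_mul_eq_one (a := w) (w ^ 2) (by rw [← pow_succ']; exact hw3)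
  obtain ⟨u, hu⟩ := hunit
  have hu3 : u ^ 3 = 1 := by
    ext
    push_cast [hu]
    exact hw3
  have hord : orderOf u = 3 := by
    have hdvd : orderOf u ∣ 3 := orderOf_dvd_of_pow_eq_one hu3
    have hne1 : orderOf u ≠ 1 := by
      intro h0
      apply hw1
      rw [orderOf_eq_one_iff] at h0
      rw [← hu, h0]
      rfl
    rcases (Nat.prime_three).eq_one_or_self_of_dvd _ hdvd with h' | h'
    · exact absurd h' hne1
    · exact h'
  have hcd := orderOf_dvd_card (x := u)
  rw [hord, ZMod.card_units p] at hcd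
  have := hp.two_le
  omega

/-- If `n` is odd and all its prime factors are `≡ 1 (mod 3)`,
then `-3` is a square mod `n`. -/
private lemma aux_C : ∀ n : ℕ, ¬ 2 ∣ n → (∀ p : ℕ, p.Prime → p ∣ n → p % 3 = 1) →
    ∃ x : ℤ, (n : ℤ) ∣ x ^ 2 + 3 := by
  intro n
  induction n using Nat.strong_induction_on with
  | _ n IH =>
  intro hodd hprimes
  rcases Nat.lt_or_ge n 2 with hn | hn
  · interval_cases n
    · omega
    · exact ⟨0, by norm_num⟩
  set p := n.minFac with hpdef
  have hp : p.Prime := Nat.minFac_prime (by omega)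
  have hpn : p ∣ n := Nat.minFac_dvd n
  obtain ⟨k, hk⟩ := hpn
  have hk0 : k ≠ 0 := by rintro rfl; omega
  have hklt : k < n := by
    have hp2 := hp.two_le
    calc k < 2 * k := by omega
    _ ≤ p * k := Nat.mul_le_mul_right k hp2
    _ = n := hk.symm
  have hkodd : ¬ 2 ∣ k := fun h => hodd (hk ▸ Dvd.dvd.mul_left h p)
  have hkprimes : ∀ q : ℕ, q.Prime → q ∣ k → q % 3 = 1 :=
    fun q hq hqk => hprimes q hq (hk ▸ hqk.mul_left p)
  obtain ⟨x, hx⟩ := IH k hklt hkodd hkprimes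
  have hp3 : p % 3 = 1 := hprimes p hp (Nat.minFac_dvd n)
  have hp2 : p ≠ 2 := by intro h; rw [h] at hp3; omega
  have hpprime : Prime (p : ℤ) := Nat.prime_iff_prime_int.mp hp
  haveI : Fact p.Prime := ⟨hp⟩
  have hkn : (n : ℤ) = (p : ℤ) * (k : ℤ) := by exact_mod_cast congrArg (Nat.cast : ℕ → ℤ) hk
  by_cases hpk : p ∣ k
  · -- Hensel lifting step
    obtain ⟨c, hc⟩ := hx
    have hpkZ : (p : ℤ) ∣ (k : ℤ) := Int.natCast_dvd_natCast.mpr hpk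
    have hpx23 : (p : ℤ) ∣ x ^ 2 + 3 := hpkZ.trans ⟨c, hc⟩
    have hpdx : ¬ (p : ℤ) ∣ x := by
      intro hdvd
      have hx2 : (p : ℤ) ∣ x ^ 2 := dvd_pow hdvd (by norm_num)
      have h3' : (p : ℤ) ∣ 3 := by
        have := dvd_sub hpx23 hx2
        simpa using this
      have : p ∣ 3 := by exact_mod_cast h3'
      have := (Nat.prime_dvd_prime_iff_eq hp Nat.prime_three).mp this
      rw [this] at hp3; omega
    have hp2x : ¬ (p : ℤ) ∣ 2 * x := by
      intro hdvd
      rcases (hpprime.dvd_mul).mp hdvd with h' | h'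
      · have : p ∣ 2 := by exact_mod_cast h'
        have := Nat.le_of_dvd (by norm_num) this
        have := hp.two_le
        exact hp2 (by omega)
      · exact hpdx h'
    set a : ZMod p := ((2 * x : ℤ) : ZMod p) with ha
    have hane : a ≠ 0 := by
      intro h0
      exact hp2x ((ZMod.intCast_zmod_eq_zero_iff_dvd _ p).mp h0)
    set t : ℤ := (((-(c : ZMod p)) * a⁻¹).val : ℤ) with ht
    have key : (p : ℤ) ∣ c + 2 * x * t := by
      rw [← ZMod.intCast_zmod_eq_zero_iff_dvd]
      have htc : ((t : ℤ) : ZMod p) = (-(c : ZMod p)) * a⁻¹ := by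
        rw [ht]
        push_cast
        rw [ZMod.natCast_val, ZMod.cast_id]
      push_cast
      rw [htc]
      have haa : a * a⁻¹ = 1 := mul_inv_cancel₀ hane
      have ha' : ((2 : ZMod p) * (x : ZMod p)) = a := by rw [ha]; push_cast; ring
      rw [← ha']  at haa ⊢
      linear_combination (-(c : ZMod p)) * haa
    obtain ⟨e, he⟩ := key
    obtain ⟨f, hf⟩ := hpkZ
    refine ⟨x + (k : ℤ) * t, ?_⟩
    refine ⟨e + f * t ^ 2, ?_⟩
    rw [hkn]
    calc (x + (k : ℤ) * t) ^ 2 + 3 = (x ^ 2 + 3) + (k : ℤ) * (2 * x * t) + (k:ℤ)^2 * t^2 := by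
          ring
    _ = (k : ℤ) * (c + 2 * x * t) + (k:ℤ)^2 * t^2 := by rw [hc]; ring
    _ = (k : ℤ) * ((p:ℤ) * e) + ((p:ℤ)*f)^2 * t^2 := by rw [← he, ← hf]
    _ = (p : ℤ) * (k : ℤ) * (e + f * t ^ 2) := by
          rw [hf]
          ring
  · -- CRT step
    obtain ⟨y, hy⟩ := aux_A p hp hp3
    have hco : IsCoprime (p : ℤ) (k : ℤ) :=
      Int.isCoprime_iff_gcd_eq_one.mpr (by
        rw [Int.gcd_natCast_natCast]
        exact (hp.coprime_iff_not_dvd).mpr hpk)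
    obtain ⟨u, v, huv⟩ := id hco
    set z : ℤ := x * u * (p : ℤ) + y * v * (k : ℤ) with hz
    have hkzx : (k : ℤ) ∣ z - x := ⟨(y - x) * v, by linear_combination x * huv⟩
    have hpzy : (p : ℤ) ∣ z - y := ⟨(x - y) * u, by linear_combination y * huv⟩
    have hkz : (k : ℤ) ∣ z ^ 2 + 3 := by
      have : z ^ 2 + 3 = (x ^ 2 + 3) + (z - x) * (z + x) := by ring
      rw [this]
      exact dvd_add hx (hkzx.mul_right _)
    have hpz : (p : ℤ) ∣ z ^ 2 + 3 := by
      have : z ^ 2 + 3 = (y ^ 2 + 3) + (z - y) * (z + y) := by ring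
      rw [this]
      exact dvd_add hy (hpzy.mul_right _)
    refine ⟨z, ?_⟩
    rw [hkn]
    exact hco.mul_dvd hpz hkz

/-- For d ≡ 2 (mod 6), d satisfies (**) iff -3 is a square modulo 2d. -/
theorem stmt_5 (d : ℤ) (hd : 0 < d) (hd6 : d % 6 = 2) :
    (2 ∣ d ∧ ¬ (4 ∣ d) ∧ ¬ (9 ∣ d) ∧
      ∀ p : ℕ, p.Prime → Odd p → p % 3 = 2 → ¬ ((p : ℤ) ∣ d)) ↔
    (∃ x : ℤ, x ^ 2 ≡ -3 [ZMOD 2 * d]) := by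
  constructor
  · rintro ⟨h2, h4, h9, hprimes⟩
    obtain ⟨m, hm⟩ := h2
    have hm0 : 0 < m := by omega
    have hmodd : ¬ (2 : ℤ) ∣ m := by
      rintro ⟨j, hj⟩
      exact h4 ⟨j, by omega⟩
    set n : ℕ := m.toNat with hn
    have hnm : (n : ℤ) = m := Int.toNat_of_nonneg hm0.le
    have hnodd : ¬ 2 ∣ n := by
      intro h
      apply hmodd
      rw [← hnm]
      exact_mod_cast Int.natCast_dvd_natCast.mpr h
    have hnprimes : ∀ p : ℕ, p.Prime → p ∣ n → p % 3 = 1 := by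
      intro p hp hpn
      have hpd : (p : ℤ) ∣ d := by
        rw [hm]
        exact Dvd.dvd.mul_left (hnm ▸ Int.natCast_dvd_natCast.mpr hpn) 2
      have hp2 : p ≠ 2 := by
        rintro rfl
        exact hnodd hpn
      have hp3 : p ≠ 3 := by
        rintro rfl
        have : (3 : ℤ) ∣ d := by exact_mod_cast hpd
        omega
      have hpodd : Odd p := hp.odd_of_ne_two hp2
      have hne2 : p % 3 ≠ 2 := by
        intro h
        exact hprimes p hp hpodd h hpd
      have hne0 : p % 3 ≠ 0 := by
        intro h
        have : (3 : ℕ) ∣ p := by omega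
        exact hp3 ((Nat.prime_dvd_prime_iff_eq Nat.prime_three hp).mp this).symm
      omega
    obtain ⟨x, hx⟩ := aux_C n hnodd hnprimes
    rw [hnm] at hx
    set x' : ℤ := if 2 ∣ x then x + m else x with hx'
    have hmx' : m ∣ x' ^ 2 + 3 := by
      rw [hx']
      split
      · have : (x + m) ^ 2 + 3 = (x ^ 2 + 3) + m * (2 * x + m) := by ring
        rw [this]
        exact dvd_add hx (Dvd.intro _ rfl)
      · exact hx
    have hox' : ¬ 2 ∣ x' := by
      rw [hx']
      split
      · rename_i h
        rintro ⟨j, hj⟩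
        obtain ⟨i, hi⟩ := h
        exact hmodd ⟨j - i, by omega⟩
      · rename_i h
        exact h
    have h4x' : (4 : ℤ) ∣ x' ^ 2 + 3 := by
      obtain ⟨j, hj⟩ : ∃ j : ℤ, x' = 2 * j + 1 := ⟨x' / 2, by omega⟩
      exact ⟨j ^ 2 + j + 1, by rw [hj]; ring⟩
    have hco2 : IsCoprime (2 : ℤ) m := ⟨-(m / 2), 1, by omega⟩
    have hco4 : IsCoprime (4 : ℤ) m := by
      have := hco2.mul_left hco2
      norm_num at this
      exact this
    have h4m : 4 * m ∣ x' ^ 2 + 3 := hco4.mul_dvd h4x' hmx'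
    refine ⟨x', Int.ModEq.symm (Int.modEq_iff_dvd.mpr ?_)⟩
    have h2d : 2 * d = 4 * m := by omega
    rw [h2d]
    simpa using h4m
  · rintro ⟨x, hx⟩
    have hdvd : 2 * d ∣ x ^ 2 + 3 := by
      obtain ⟨c, hc⟩ := Int.ModEq.dvd hx
      exact ⟨-c, by linarith⟩
    refine ⟨by omega, ?_, by omega, ?_⟩
    · rintro ⟨j, hj⟩
      have h8 : (8 : ℤ) ∣ x ^ 2 + 3 := dvd_trans ⟨j, by omega⟩ hdvd
      have hz := (ZMod.intCast_zmod_eq_zero_iff_dvd (x ^ 2 + 3) 8).mpr h8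
      push_cast at hz
      exact (by decide : ∀ a : ZMod 8, ¬ (a ^ 2 + 3 = 0)) _ hz
    · intro p hp hpodd hp32 hpd
      have hpx : (p : ℤ) ∣ x ^ 2 + 3 := (hpd.trans (dvd_mul_left d 2)).trans hdvd
      rcases aux_B p hp hpodd x hpx with h | h
      · rw [h] at hp32; omega
      · omega
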